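/- Let $a_i, b_{i\alpha}, c_{i_1\cdots i_\ell \alpha} \in \mathbb{C}$ for $1 \le i, i_1,\dots,i_\ell \le p$ and $1 \le \alpha \le n$, where $c$ is skew-symmetric in the indices $i_1,\dots,i_\ell$. Then for any fixed $1 \le i_1 < \cdots < i_{\ell-1} \le p$: $\big|\sum_{i,j,\alpha} \bar a_j (a_j b_{i\alpha} - a_i b_{j\alpha}) c_{i i_1\cdots i_{\ell-1}\alpha}\big|^2 \le q \big(\sum_i |a_i|^2\big) \sum_{i}\sum_{j<k} \big|\sum_\alpha (a_j b_{k\alpha} - a_k b_{j\alpha}) c_{i i_1\cdots i_{\ell-1}\alpha}\big|^2$, where $q = \min\{p-1, n\}$ if $\ell = 1$ and $q = \min\{p-\ell+1, n\}$ if $\ell \ge 2$. -/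

import Mathlib

open Complex Finset


lemma skoda_proj_sum {p : ℕ} (P : Fin p → Fin p → ℂ)
    (hP2 : ∀ i j, ∑ k, P i k * P k j = P i j)
    (hPh : ∀ i j, P j i = (starRingEnd ℂ) (P i j)) :
    ∑ i, ∑ j, ‖P i j‖ ^ 2 = (∑ i, P i i).re := by
  rw [Complex.re_sum]
  refine Finset.sum_congr rfl fun i _ => ?_
  have : ∀ j, ‖P i j‖ ^ 2 = (P i j * P j i).re := by
    intro j
    rw [hPh i j, Complex.mul_conj, Complex.sq_norm, Complex.ofReal_re]
  simp_rw [this]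
  rw [← Complex.re_sum, hP2 i i]

lemma skoda_core {p : ℕ} (P M : Fin p → Fin p → ℂ) (q : ℝ)
    (hPM : ∀ i j, ∑ k, P i k * M k j = M i j)
    (hq : ∑ i, ∑ k, ‖P i k‖ ^ 2 ≤ q) :
    ‖∑ i, M i i‖ ^ 2 ≤ q * ∑ i, ∑ j, ‖M i j‖ ^ 2 := by
  have h1 : ∑ i, M i i = ∑ st : Fin p × Fin p, P st.1 st.2 * M st.2 st.1 := by
    rw [Fintype.sum_prod_type]
    exact Finset.sum_congr rfl fun i _ => (hPM i i).symm
  have h2 : ‖∑ i, M i i‖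
      ≤ ∑ st : Fin p × Fin p, ‖P st.1 st.2‖ * ‖M st.2 st.1‖ := by
    rw [h1]
    refine (norm_sum_le _ _).trans_eq ?_
    exact Finset.sum_congr rfl fun st _ => norm_mul _ _
  have h3 : (∑ st : Fin p × Fin p, ‖P st.1 st.2‖ * ‖M st.2 st.1‖) ^ 2
      ≤ (∑ st : Fin p × Fin p, ‖P st.1 st.2‖ ^ 2) *
        ∑ st : Fin p × Fin p, ‖M st.2 st.1‖ ^ 2 :=
    Finset.sum_mul_sq_le_sq_mul_sq _ _ _
  have h4 : (∑ st : Fin p × Fin p, ‖P st.1 st.2‖ ^ 2) ≤ q := by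
    rw [Fintype.sum_prod_type]; exact hq
  have h5 : (∑ st : Fin p × Fin p, ‖M st.2 st.1‖ ^ 2)
      = ∑ i, ∑ j, ‖M i j‖ ^ 2 := by
    rw [Fintype.sum_prod_type, Finset.sum_comm]
  calc ‖∑ i, M i i‖ ^ 2
      ≤ (∑ st : Fin p × Fin p, ‖P st.1 st.2‖ * ‖M st.2 st.1‖) ^ 2 := by
        apply pow_le_pow_left₀ (norm_nonneg _) h2
    _ ≤ (∑ st : Fin p × Fin p, ‖P st.1 st.2‖ ^ 2) *
        ∑ st : Fin p × Fin p, ‖M st.2 st.1‖ ^ 2 := h3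
    _ ≤ q * ∑ i, ∑ j, ‖M i j‖ ^ 2 := by
        rw [h5]; apply mul_le_mul_of_nonneg_right h4 (by positivity)


lemma skoda_exists_onb {E : Type*} [NormedAddCommGroup E] [InnerProductSpace ℂ E]
    [FiniteDimensional ℂ E] {n : ℕ} (v : Fin n → E) :
    ∃ (r : ℕ) (f : Fin r → E), r ≤ n ∧ Orthonormal ℂ f ∧
      ∀ α, v α ∈ Submodule.span ℂ (Set.range f) := by
  classical
  set U : Submodule ℂ E := Submodule.span ℂ (Set.range v) with hU
  have hrn : Module.finrank ℂ U ≤ n := by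
    refine le_trans (finrank_span_le_card (R := ℂ) (Set.range v)) ?_
    rw [Set.toFinset_card]
    exact le_trans (Fintype.card_range_le v) (by simp)
  set r := Module.finrank ℂ U with hr
  set b := stdOrthonormalBasis ℂ U with hb
  refine ⟨r, fun s => ((b s : U) : E), hrn, ?_, ?_⟩
  · refine orthonormal_iff_ite.mpr fun s u => ?_
    rw [← Submodule.coe_inner]
    exact orthonormal_iff_ite.mp b.orthonormal s u
  · intro α
    have hspan : Submodule.span ℂ (Set.range fun s => ((b s : U) : E)) = U := by
      have h1 : (Set.range fun s => ((b s : U) : E)) = U.subtype '' Set.range b := by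
        rw [← Set.range_comp]; rfl
      have h2 := b.toBasis.span_eq
      rw [b.coe_toBasis] at h2
      rw [h1, ← Submodule.map_span, h2]
      simp [Submodule.map_top, Submodule.range_subtype]
    rw [hspan]
    exact Submodule.subset_span ⟨α, rfl⟩

lemma skoda_onb_expand {E : Type*} [NormedAddCommGroup E] [InnerProductSpace ℂ E]
    {r : ℕ} (f : Fin r → E) (hf : Orthonormal ℂ f) (x : E)
    (hx : x ∈ Submodule.span ℂ (Set.range f)) :
    ∑ s, (inner ℂ (f s) x : ℂ) • f s = x := by
  obtain ⟨c, rfl⟩ := (Submodule.mem_span_range_iff_exists_fun ℂ).mp hx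
  have h1 : ∀ s, (inner ℂ (f s) (∑ u, c u • f u) : ℂ) = c s := by
    intro s
    rw [inner_sum]
    have : ∀ u, (inner ℂ (f s) (c u • f u) : ℂ) = c u * (if s = u then 1 else 0) := by
      intro u
      rw [inner_smul_right, orthonormal_iff_ite.mp hf s u]
    simp_rw [this, mul_ite, mul_one, mul_zero, Finset.sum_ite_eq, Finset.mem_univ, if_true]
  exact Finset.sum_congr rfl fun s _ => by rw [h1 s]

lemma skoda_bound_n {p n : ℕ} (t cw : Fin p → Fin n → ℂ) :
    ‖∑ i, (∑ α, t i α * cw i α)‖ ^ 2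
      ≤ (n : ℝ) * ∑ i, ∑ j, ‖∑ α, t i α * cw j α‖ ^ 2 := by
  classical
  set M : Fin p → Fin p → ℂ := fun i j => ∑ α, t i α * cw j α with hM
  set tv : Fin n → EuclideanSpace ℂ (Fin p) := fun α => WithLp.toLp 2 (fun i => t i α) with htv
  obtain ⟨r, f, hrn, hf, hspan⟩ := skoda_exists_onb tv
  have horm : ∀ s u : Fin r, ∑ k, (starRingEnd ℂ) (f s k) * f u k
      = if s = u then 1 else 0 := by
    intro s u
    have h1 : (inner ℂ (f s) (f u) : ℂ) = if s = u then 1 else 0 :=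
      orthonormal_iff_ite.mp hf s u
    rw [← h1, PiLp.inner_apply]
    simp [mul_comm]
  set P : Fin p → Fin p → ℂ := fun i j => ∑ s, f s i * (starRingEnd ℂ) (f s j) with hP
  have hPh : ∀ i j, P j i = (starRingEnd ℂ) (P i j) := by
    intro i j
    rw [hP, map_sum]
    refine Finset.sum_congr rfl fun s _ => ?_
    simp only [map_mul, Complex.conj_conj]
    ring
  have hP2 : ∀ i j, ∑ k, P i k * P k j = P i j := by
    intro i j
    have expand : ∀ k, P i k * P k j
        = ∑ s, ∑ u, (f s i * (starRingEnd ℂ) (f u j)) *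
            ((starRingEnd ℂ) (f s k) * f u k) := by
      intro k
      rw [hP, Finset.sum_mul_sum]
      exact Finset.sum_congr rfl fun s _ => Finset.sum_congr rfl fun u _ => by ring
    simp_rw [expand]
    rw [Finset.sum_comm]
    have inner_swap : ∀ s : Fin r, ∑ k, ∑ u : Fin r, (f s i * (starRingEnd ℂ) (f u j)) *
        ((starRingEnd ℂ) (f s k) * f u k)
        = ∑ u, (f s i * (starRingEnd ℂ) (f u j)) * ∑ k, (starRingEnd ℂ) (f s k) * f u k := by
      intro s
      rw [Finset.sum_comm]
      exact Finset.sum_congr rfl fun u _ => by rw [Finset.mul_sum]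
    simp_rw [inner_swap, horm]
    rw [hP]
    refine Finset.sum_congr rfl fun s _ => ?_
    simp [Finset.sum_ite_eq, mul_ite]
  have hdiag : (∑ i, P i i) = (r : ℂ) := by
    rw [hP, Finset.sum_comm]
    have : ∀ s : Fin r, ∑ i, f s i * (starRingEnd ℂ) (f s i) = 1 := by
      intro s
      have h := horm s s
      rw [if_pos rfl] at h
      rw [← h]
      exact Finset.sum_congr rfl fun i _ => by ring
    simp [this]
  have hq : ∑ i, ∑ k, ‖P i k‖ ^ 2 ≤ (n : ℝ) := by
    rw [skoda_proj_sum P hP2 hPh, hdiag]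
    simp only [Complex.natCast_re]
    exact_mod_cast hrn
  have hPM : ∀ i j, ∑ k, P i k * M k j = M i j := by
    intro i j
    have hcolmem : WithLp.toLp 2 (fun i => M i j) ∈ Submodule.span ℂ (Set.range f) := by
      have hcol : WithLp.toLp 2 (fun i => M i j) = ∑ α, cw j α • tv α := by
        ext i'
        simp [tv, M, mul_comm]
      rw [hcol]
      exact Submodule.sum_smul_mem _ _ (fun α _ => hspan α)
    have hexp := skoda_onb_expand f hf _ hcolmem
    have hexp2 := congrArg (fun v => v i) hexp
    rw [WithLp.ofLp_sum, Finset.sum_apply i univ _] at hexp2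
    calc ∑ k, P i k * M k j
        = ∑ k, ∑ s, f s i * (starRingEnd ℂ) (f s k) * M k j := by
          refine Finset.sum_congr rfl fun k _ => ?_; rw [hP]; exact Finset.sum_mul _ _ _
      _ = ∑ s, ∑ k, f s i * (starRingEnd ℂ) (f s k) * M k j := Finset.sum_comm
      _ = ∑ s, ((inner ℂ (f s) (WithLp.toLp 2 (fun i => M i j)) : ℂ) • f s) i := by
          refine Finset.sum_congr rfl fun s _ => ?_
          have : (inner ℂ (f s) (WithLp.toLp 2 (fun i => M i j)) : ℂ)
              = ∑ k, (starRingEnd ℂ) (f s k) * M k j := by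
            rw [PiLp.inner_apply]; simp [mul_comm]
          rw [this]
          show _ = (∑ k, (starRingEnd ℂ) (f s k) * M k j) * f s i
          rw [Finset.sum_mul]
          exact Finset.sum_congr rfl fun k _ => by ring
      _ = M i j := hexp2
  exact skoda_core P M _ hPM hq



lemma skoda_bound_rank_one {p : ℕ} (hp : 1 ≤ p) (a : Fin p → ℂ) (M : Fin p → Fin p → ℂ)
    (A : ℝ) (hA : ((A : ℂ)) = ∑ k, (starRingEnd ℂ) (a k) * a k) (hA0 : A ≠ 0)
    (horth : ∀ j, ∑ k, (starRingEnd ℂ) (a k) * M k j = 0) :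
    ‖∑ i, M i i‖ ^ 2 ≤ ((p - 1 : ℕ) : ℝ) * ∑ i, ∑ j, ‖M i j‖ ^ 2 := by
  set P : Fin p → Fin p → ℂ := fun i j => (if i = j then 1 else 0) - a i * (starRingEnd ℂ) (a j) / A with hP
  have hAc : (A : ℂ) ≠ 0 := by exact_mod_cast Complex.ofReal_ne_zero.mpr hA0
  have hPM : ∀ i j, ∑ k, P i k * M k j = M i j := by
    intro i j
    have : ∀ k, P i k * M k j = (if i = k then M k j else 0)
        - (a i / A) * ((starRingEnd ℂ) (a k) * M k j) := by
      intro k; simp only [hP]; split_ifs <;> ring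
    simp_rw [this, Finset.sum_sub_distrib, ← Finset.mul_sum, horth j, mul_zero, sub_zero,
      Finset.sum_ite_eq, Finset.mem_univ, if_true]
  have hP2 : ∀ i j, ∑ k, P i k * P k j = P i j := by
    intro i j
    have : ∀ k, P i k * P k j = (if i = k then (if k = j then (1:ℂ) else 0) else 0)
        - (if i = k then a k * (starRingEnd ℂ) (a j) / A else 0)
        - (if k = j then a i * (starRingEnd ℂ) (a k) / A else 0)
        + (a i * (starRingEnd ℂ) (a j) / ((A:ℂ) * A)) * ((starRingEnd ℂ) (a k) * a k) := by
      intro k; simp only [hP]; split_ifs <;> ring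
    simp_rw [this, Finset.sum_add_distrib, Finset.sum_sub_distrib, ← Finset.mul_sum, ← hA,
      Finset.sum_ite_eq, Finset.sum_ite_eq', Finset.mem_univ, if_true]
    simp only [hP]
    split_ifs with h
    · subst h; field_simp; ring
    · field_simp; ring
  have hPh : ∀ i j, P j i = (starRingEnd ℂ) (P i j) := by
    intro i j
    rcases eq_or_ne i j with h | h
    · subst h
      simp only [hP, if_pos rfl, if_true, map_sub, map_one, map_div₀, map_mul, Complex.conj_conj,
        Complex.conj_ofReal]
      ring
    · simp only [hP, if_neg h, if_neg (Ne.symm h), map_sub, map_zero, map_div₀, map_mul,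
        Complex.conj_conj, Complex.conj_ofReal]
      ring
  have hdiag : (∑ i, P i i).re = ((p - 1 : ℕ) : ℝ) := by
    have : ∑ i, P i i = ((p : ℂ)) - 1 := by
      have : ∀ i : Fin p, P i i = 1 - (a i * (starRingEnd ℂ) (a i)) / A := by
        intro i; simp [hP]
      simp_rw [this, Finset.sum_sub_distrib, ← Finset.sum_div]
      have : ∑ i, a i * (starRingEnd ℂ) (a i) = (A : ℂ) := by
        rw [hA]; exact Finset.sum_congr rfl fun i _ => mul_comm _ _
      rw [this, div_self hAc]
      simp [Finset.card_univ]
    rw [this]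
    have : ((p - 1 : ℕ) : ℝ) = (p : ℝ) - 1 := by
      have := hp; push_cast [Nat.cast_sub hp]; ring
    rw [this]; simp
  have := skoda_proj_sum P hP2 hPh
  exact skoda_core P M _ hPM (le_of_eq (this.trans hdiag))


lemma skoda_half_sum {p : ℕ} (F : Fin p → Fin p → ℝ)
    (hsymm : ∀ j k, F j k = F k j) (hdiag : ∀ j, F j j = 0) :
    ∑ j, ∑ k, F j k = 2 * ∑ j, ∑ k, (if j < k then F j k else 0) := by
  have point : ∀ j k, F j k = (if j < k then F j k else 0) + (if k < j then F j k else 0) := by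
    intro j k
    rcases lt_trichotomy j k with h | h | h
    · simp [h, not_lt_of_gt h]
    · subst h; simp [lt_irrefl, hdiag j]
    · simp [h, not_lt_of_gt h]
  have swap : ∑ j, ∑ k, (if k < j then F j k else 0)
      = ∑ j, ∑ k, (if j < k then F j k else 0) := by
    conv_lhs => rw [Finset.sum_comm]
    exact Finset.sum_congr rfl fun k _ => Finset.sum_congr rfl fun j _ => by rw [hsymm]
  calc ∑ j, ∑ k, F j k
      = ∑ j, ∑ k, ((if j < k then F j k else 0) + (if k < j then F j k else 0)) := by
        exact Finset.sum_congr rfl fun j _ => Finset.sum_congr rfl fun k _ => point j k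
    _ = (∑ j, ∑ k, (if j < k then F j k else 0)) + ∑ j, ∑ k, (if k < j then F j k else 0) := by
        simp [Finset.sum_add_distrib]
    _ = 2 * ∑ j, ∑ k, (if j < k then F j k else 0) := by rw [swap]; ring

lemma skoda_bound_subset {p : ℕ} (M : Fin p → Fin p → ℂ) (S : Finset (Fin p))
    (hzero : ∀ i, i ∉ S → M i i = 0) :
    ‖∑ i, M i i‖ ^ 2 ≤ (S.card : ℝ) * ∑ i, ∑ j, ‖M i j‖ ^ 2 := by
  have h1 : ∑ i, M i i = ∑ i ∈ S, M i i :=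
    (Finset.sum_subset (Finset.subset_univ S) (fun i _ hi => hzero i hi)).symm
  have h2 : ‖∑ i ∈ S, M i i‖ ≤ ∑ i ∈ S, ‖M i i‖ :=
    norm_sum_le _ _
  have h3 : (∑ i ∈ S, ‖M i i‖) ^ 2
      ≤ (S.card : ℝ) * ∑ i ∈ S, ‖M i i‖ ^ 2 := by
    have := Finset.sum_mul_sq_le_sq_mul_sq S (fun _ => (1 : ℝ)) (fun i => ‖M i i‖)
    simpa using this
  have h4 : ∑ i ∈ S, ‖M i i‖ ^ 2 ≤ ∑ i, ∑ j, ‖M i j‖ ^ 2 := by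
    refine le_trans (Finset.sum_le_sum_of_subset_of_nonneg (Finset.subset_univ S)
      (fun i _ _ => by positivity)) ?_
    refine Finset.sum_le_sum fun i _ => ?_
    exact Finset.single_le_sum (f := fun j => ‖M i j‖ ^ 2)
      (fun j _ => by positivity) (Finset.mem_univ i)
  calc ‖∑ i, M i i‖ ^ 2
      = ‖∑ i ∈ S, M i i‖ ^ 2 := by rw [h1]
    _ ≤ (∑ i ∈ S, ‖M i i‖) ^ 2 := by
        apply pow_le_pow_left₀ (norm_nonneg _) h2
    _ ≤ (S.card : ℝ) * ∑ i ∈ S, ‖M i i‖ ^ 2 := h3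
    _ ≤ (S.card : ℝ) * ∑ i, ∑ j, ‖M i j‖ ^ 2 := by
        apply mul_le_mul_of_nonneg_left h4 (by positivity)

lemma skoda_lagrange {p : ℕ} (a v : Fin p → ℂ)
    (hZ : ∑ k, (starRingEnd ℂ) (a k) * v k = 0) :
    ∑ j, ∑ k, ((a j * v k - a k * v j) * (starRingEnd ℂ) (a j * v k - a k * v j))
      = 2 * (∑ j, a j * (starRingEnd ℂ) (a j)) * (∑ k, v k * (starRingEnd ℂ) (v k)) := by
  have hZ' : ∑ k, a k * (starRingEnd ℂ) (v k) = 0 := by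
    calc ∑ k, a k * (starRingEnd ℂ) (v k)
        = ∑ k, (starRingEnd ℂ) ((starRingEnd ℂ) (a k) * v k) := by
          refine Finset.sum_congr rfl fun k _ => ?_
          rw [map_mul, Complex.conj_conj]
      _ = (starRingEnd ℂ) (∑ k, (starRingEnd ℂ) (a k) * v k) := (map_sum _ _ _).symm
      _ = 0 := by rw [hZ, map_zero]
  have point : ∀ j k, (a j * v k - a k * v j) * (starRingEnd ℂ) (a j * v k - a k * v j)
      = (a j * (starRingEnd ℂ) (a j)) * (v k * (starRingEnd ℂ) (v k))
        + (v j * (starRingEnd ℂ) (v j)) * (a k * (starRingEnd ℂ) (a k))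
        - (a j * (starRingEnd ℂ) (v j)) * ((starRingEnd ℂ) (a k) * v k)
        - ((starRingEnd ℂ) (a j) * v j) * (a k * (starRingEnd ℂ) (v k)) := by
    intro j k
    simp only [map_sub, map_mul]
    ring
  simp_rw [point]
  simp_rw [Finset.sum_sub_distrib]
  simp_rw [Finset.sum_add_distrib]
  simp_rw [← Finset.mul_sum]
  simp only [hZ, hZ', mul_zero, sub_zero]
  simp only [Finset.sum_const_zero, sub_zero]
  rw [← Finset.sum_mul, ← Finset.sum_mul]
  ring

lemma skoda_col {p : ℕ} (A : ℝ) (hA0 : A ≠ 0) (hAnn : 0 ≤ A)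
    (a v : Fin p → ℂ) (D : Fin p → Fin p → ℂ)
    (hZ : ∑ k, (starRingEnd ℂ) (a k) * v k = 0)
    (hAc : ((A : ℂ)) = ∑ k, (starRingEnd ℂ) (a k) * a k)
    (hD : ∀ j k, (A : ℂ) * D j k = a j * v k - a k * v j) :
    A * (∑ j, ∑ k, if j < k then ‖D j k‖ ^ 2 else 0)
      = ∑ k, ‖v k‖ ^ 2 := by
  set x : Fin p → Fin p → ℂ := fun j k => a j * v k - a k * v j with hx
  have lag := skoda_lagrange a v hZ
  have ha : ∑ j, a j * (starRingEnd ℂ) (a j) = (A : ℂ) := by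
    rw [hAc]; exact Finset.sum_congr rfl fun j _ => by ring
  have lagR : ∑ j, ∑ k, ‖x j k‖ ^ 2 = 2 * A * ∑ k, ‖v k‖ ^ 2 := by
    have cast1 : ((∑ j, ∑ k, ‖x j k‖ ^ 2 : ℝ) : ℂ)
        = ∑ j, ∑ k, (x j k * (starRingEnd ℂ) (x j k)) := by
      push_cast
      refine Finset.sum_congr rfl fun j _ => Finset.sum_congr rfl fun k _ => ?_
      rw [Complex.mul_conj, ← Complex.ofReal_pow, Complex.sq_norm]
    have cast2 : ((2 * A * ∑ k, ‖v k‖ ^ 2 : ℝ) : ℂ)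
        = 2 * (∑ j, a j * (starRingEnd ℂ) (a j)) * (∑ k, v k * (starRingEnd ℂ) (v k)) := by
      rw [ha]
      push_cast
      rw [mul_assoc, mul_assoc]
      congr 1
      rw [Finset.mul_sum, Finset.mul_sum]
      refine Finset.sum_congr rfl fun k _ => ?_
      rw [Complex.mul_conj, ← Complex.ofReal_pow, Complex.sq_norm]
    have hc := cast1.trans (lag.trans cast2.symm)
    exact_mod_cast hc
  have half : 2 * ∑ j, ∑ k, (if j < k then ‖x j k‖ ^ 2 else 0)
      = 2 * A * ∑ k, ‖v k‖ ^ 2 := by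
    rw [← lagR]
    rw [skoda_half_sum (fun j k => ‖x j k‖ ^ 2)]
    · intro j k
      have hxx : x k j = - x j k := by rw [hx]; ring
      rw [hxx, norm_neg]
    · intro j
      have hxx : x j j = 0 := by rw [hx]; ring
      rw [hxx]; simp
  have habs : ∀ j k, ‖x j k‖ ^ 2 = A ^ 2 * ‖D j k‖ ^ 2 := by
    intro j k
    show ‖a j * v k - a k * v j‖ ^ 2 = _
    rw [← hD j k, norm_mul, Complex.norm_real, Real.norm_of_nonneg hAnn]
    ring
  have hT2 : ∑ j, ∑ k, (if j < k then ‖x j k‖ ^ 2 else 0)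
      = A ^ 2 * ∑ j, ∑ k, (if j < k then ‖D j k‖ ^ 2 else 0) := by
    simp_rw [Finset.mul_sum]
    refine Finset.sum_congr rfl fun j _ => Finset.sum_congr rfl fun k _ => ?_
    rw [mul_ite, mul_zero, habs j k]
  have h6 : A ^ 2 * ∑ j, ∑ k, (if j < k then ‖D j k‖ ^ 2 else 0)
      = A * ∑ k, ‖v k‖ ^ 2 := by
    have h5 : 2 * (A ^ 2 * ∑ j, ∑ k, (if j < k then ‖D j k‖ ^ 2 else 0))
        = 2 * (A * ∑ k, ‖v k‖ ^ 2) := by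
      rw [← hT2, half]; ring
    linarith
  refine mul_left_cancel₀ hA0 ?_
  rw [← mul_assoc, ← pow_two]
  exact h6

/-- Generalized Skoda inequality (Lemma 1): for constants `a_i`, `b_{iα}` and a
skew-symmetric array `c_{i₁⋯i_ℓ α}` (skew in the first `ℓ = m + 1` indices), and
any fixed strictly increasing multi-index `i₁ < ⋯ < i_{ℓ-1}` (encoded by a
strictly monotone `w : Fin m → Fin p`), the stated estimate holds with
`q = min (p-1) n` if `ℓ = 1` and `q = min (p-ℓ+1) n` if `ℓ ≥ 2`. -/
theorem generalized_skoda_inequality (p n m : ℕ) (hpm : m + 1 ≤ p)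
    (a : Fin p → ℂ) (b : Fin p → Fin n → ℂ)
    (c : (Fin (m + 1) → Fin p) → Fin n → ℂ)
    (hskew : ∀ (v : Fin (m + 1) → Fin p) (s t : Fin (m + 1)) (α : Fin n), s ≠ t →
      c (v ∘ Equiv.swap s t) α = - c v α)
    (w : Fin m → Fin p) (hw : StrictMono w) :
    ‖∑ i : Fin p, ∑ j : Fin p, ∑ α : Fin n,
        (starRingEnd ℂ) (a j) * (a j * b i α - a i * b j α) * c (Fin.cons i w) α‖ ^ 2
      ≤ ((if m = 0 then min (p - 1) n else min (p - m) n : ℕ) : ℝ) *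
          (∑ i : Fin p, ‖a i‖ ^ 2) *
          ∑ i : Fin p, ∑ j : Fin p, ∑ k : Fin p,
            (if j < k then
              ‖∑ α : Fin n,
                (a j * b k α - a k * b j α) * c (Fin.cons i w) α‖ ^ 2
            else 0) := by
  classical
  set cv : Fin p → Fin n → ℂ := fun i α => c (Fin.cons i w) α with hcv
  set A : ℝ := ∑ i, ‖a i‖ ^ 2 with hA
  by_cases hA0 : A = 0
  · have ha : ∀ i, a i = 0 := by
      intro i
      have h1 : ∀ j ∈ Finset.univ, (0:ℝ) ≤ ‖a j‖ ^ 2 := fun j _ => by positivity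
      have h2 := (Finset.sum_eq_zero_iff_of_nonneg h1).mp (hA ▸ hA0) i (Finset.mem_univ i)
      have h3 : ‖a i‖ = 0 := by
        have := sq_nonneg (‖a i‖)
        nlinarith [norm_nonneg (a i)]
      exact norm_eq_zero.mp h3
    simp [ha]
  · have hApos : 0 < A := lt_of_le_of_ne (by rw [hA]; positivity) (Ne.symm hA0)
    set sf : Fin n → ℂ := fun α => ∑ j, (starRingEnd ℂ) (a j) * b j α with hsf
    set t : Fin p → Fin n → ℂ := fun i α => (A : ℂ) * b i α - a i * sf α with ht
    set M : Fin p → Fin p → ℂ := fun i j => ∑ α, t i α * cv j α with hM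
    have hAc : ((A : ℂ)) = ∑ k, (starRingEnd ℂ) (a k) * a k := by
      rw [hA]
      push_cast
      refine Finset.sum_congr rfl fun k _ => ?_
      rw [← Complex.ofReal_pow, Complex.sq_norm, Complex.normSq_eq_conj_mul_self]
    have hta : ∀ α, ∑ k, (starRingEnd ℂ) (a k) * t k α = 0 := by
      intro α
      have point : ∀ k, (starRingEnd ℂ) (a k) * t k α
          = (A : ℂ) * ((starRingEnd ℂ) (a k) * b k α)
            - ((starRingEnd ℂ) (a k) * a k) * sf α := by
        intro k; simp only [ht]; ring
      simp_rw [point, Finset.sum_sub_distrib, ← Finset.mul_sum, ← Finset.sum_mul, ← hAc]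
      simp only [hsf]
      ring
    have horth : ∀ j, ∑ k, (starRingEnd ℂ) (a k) * M k j = 0 := by
      intro j
      calc ∑ k, (starRingEnd ℂ) (a k) * M k j
          = ∑ k, ∑ α, (starRingEnd ℂ) (a k) * (t k α * cv j α) := by
            simp only [hM, Finset.mul_sum]
        _ = ∑ α, ∑ k, (starRingEnd ℂ) (a k) * (t k α * cv j α) := Finset.sum_comm
        _ = ∑ α, (∑ k, (starRingEnd ℂ) (a k) * t k α) * cv j α := by
            refine Finset.sum_congr rfl fun α _ => ?_
            rw [Finset.sum_mul]
            exact Finset.sum_congr rfl fun k _ => by ring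
        _ = 0 := by simp [hta]
    have hLHS : (∑ i, ∑ j, ∑ α, (starRingEnd ℂ) (a j) * (a j * b i α - a i * b j α) * cv i α)
        = ∑ i, M i i := by
      refine Finset.sum_congr rfl fun i _ => ?_
      rw [Finset.sum_comm]
      simp only [hM]
      refine Finset.sum_congr rfl fun α _ => ?_
      rw [← Finset.sum_mul]
      congr 1
      have point : ∀ j, (starRingEnd ℂ) (a j) * (a j * b i α - a i * b j α)
          = ((starRingEnd ℂ) (a j) * a j) * b i α
            - a i * ((starRingEnd ℂ) (a j) * b j α) := fun j => by ring
      simp_rw [point, Finset.sum_sub_distrib, ← Finset.sum_mul, ← Finset.mul_sum, ← hAc]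
      rfl
    have hDid : ∀ i j k, (A : ℂ) * (∑ α, (a j * b k α - a k * b j α) * cv i α)
        = a j * M k i - a k * M j i := by
      intro i j k
      rw [Finset.mul_sum]
      have point : ∀ α, (A : ℂ) * ((a j * b k α - a k * b j α) * cv i α)
          = a j * (t k α * cv i α) - a k * (t j α * cv i α) := by
        intro α; simp only [ht]; ring
      simp_rw [point, Finset.sum_sub_distrib, ← Finset.mul_sum]
      rfl
    have hcolA : ∀ i, A * (∑ j, ∑ k, if j < k then
        ‖∑ α, (a j * b k α - a k * b j α) * cv i α‖ ^ 2 else 0)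
        = ∑ k, ‖M k i‖ ^ 2 := by
      intro i
      exact skoda_col A hA0 (le_of_lt hApos) a (fun k => M k i)
        (fun j k => ∑ α, (a j * b k α - a k * b j α) * cv i α)
        (horth i) hAc (fun j k => hDid i j k)
    have hAT : A * (∑ i, ∑ j, ∑ k, if j < k then
        ‖∑ α, (a j * b k α - a k * b j α) * cv i α‖ ^ 2 else 0)
        = ∑ i, ∑ j, ‖M i j‖ ^ 2 := by
      rw [Finset.mul_sum]
      calc ∑ i, A * (∑ j, ∑ k, if j < k then
            ‖∑ α, (a j * b k α - a k * b j α) * cv i α‖ ^ 2 else 0)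
          = ∑ i, ∑ k, ‖M k i‖ ^ 2 :=
            Finset.sum_congr rfl fun i _ => hcolA i
        _ = ∑ i, ∑ j, ‖M i j‖ ^ 2 := Finset.sum_comm
    have hcv0 : ∀ (s0 : Fin m) (α : Fin n), cv (w s0) α = 0 := by
      intro s0 α
      have hne : (0 : Fin (m+1)) ≠ s0.succ := (Fin.succ_ne_zero s0).symm
      have heq : (Fin.cons (w s0) w : Fin (m+1) → Fin p) ∘ Equiv.swap 0 s0.succ
          = Fin.cons (w s0) w := by
        funext u
        simp only [Function.comp_apply]
        rcases eq_or_ne u 0 with h0 | h0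
        · subst h0; rw [Equiv.swap_apply_left, Fin.cons_succ, Fin.cons_zero]
        · rcases eq_or_ne u s0.succ with h1 | h1
          · subst h1; rw [Equiv.swap_apply_right, Fin.cons_zero, Fin.cons_succ]
          · rw [Equiv.swap_apply_of_ne_of_ne h0 h1]
      have h2 := hskew (Fin.cons (w s0) w) 0 s0.succ α hne
      rw [heq] at h2
      have h3 : cv (w s0) α = - cv (w s0) α := by
        simp only [hcv]; exact h2
      have h4 : cv (w s0) α + cv (w s0) α = 0 := eq_neg_iff_add_eq_zero.mp h3
      exact add_self_eq_zero.mp h4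
    have hboundn : ‖∑ i, M i i‖ ^ 2
        ≤ (n : ℝ) * ∑ i, ∑ j, ‖M i j‖ ^ 2 := by
      have hb := skoda_bound_n t cv
      simp only [hM]
      exact hb
    have hbound : ‖∑ i, M i i‖ ^ 2
        ≤ ((if m = 0 then min (p - 1) n else min (p - m) n : ℕ) : ℝ) *
          ∑ i, ∑ j, ‖M i j‖ ^ 2 := by
      by_cases hm : m = 0
      · rw [if_pos hm]
        rcases le_total (p - 1) n with h | h
        · rw [min_eq_left h]
          have hp1 : 1 ≤ p := le_trans (by omega) hpm
          exact skoda_bound_rank_one hp1 a M A hAc hA0 horth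
        · rw [min_eq_right h]
          exact hboundn
      · rw [if_neg hm]
        rcases le_total (p - m) n with h | h
        · rw [min_eq_left h]
          set S : Finset (Fin p) := (Finset.image w Finset.univ)ᶜ with hS
          have hcard : S.card = p - m := by
            rw [hS, Finset.card_compl, Finset.card_image_of_injective _ hw.injective]
            simp [Finset.card_univ]
          have hz : ∀ i, i ∉ S → M i i = 0 := by
            intro i hi
            have hi2 : i ∈ Finset.image w Finset.univ := by
              by_contra hcon
              exact hi (Finset.mem_compl.mpr hcon)
            obtain ⟨s0, -, hs0⟩ := Finset.mem_image.mp hi2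
            have hzero : ∀ α, cv i α = 0 := fun α => hs0 ▸ hcv0 s0 α
            simp only [hM]
            exact Finset.sum_eq_zero fun α _ => by rw [hzero α, mul_zero]
          have hsb := skoda_bound_subset M S hz
          rwa [hcard] at hsb
        · rw [min_eq_right h]
          exact hboundn
    rw [hLHS]
    refine le_trans hbound (le_of_eq ?_)
    rw [← hAT]
    ring
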